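/- For every sufficiently large natural number n, the characteristic equation λ + n²e^{−λ} = 0 has a complex root λ_n with Re(λ_n) ≥ ln(n²) − ln ln(n²) − 1. In particular there is a sequence of roots whose real parts tend to +∞. -/

import Mathlib

open Real Set

/-- Auxiliary function: for `y ∈ (π/2, π)`, `gfun y = e^x * y / sin y` where
`x = -y cos y / sin y`; a root `gfun y = n²` yields a characteristic root `x + iy`. -/
noncomputable def gfun (y : ℝ) : ℝ :=
  Real.exp (-y * Real.cos y / Real.sin y) * (y / Real.sin y)

lemma gfun_pi_div_two : gfun (π / 2) = π / 2 := by
  simp [gfun, Real.cos_pi_div_two, Real.sin_pi_div_two]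

set_option maxHeartbeats 1000000 in
theorem stmt1 :
    ∃ N : ℕ, ∀ n : ℕ, N ≤ n →
      ∃ l : ℂ, l + (n : ℂ)^2 * Complex.exp (-l) = 0 ∧
        Real.log ((n : ℝ)^2) - Real.log (Real.log ((n : ℝ)^2)) - 1 ≤ l.re := by
  refine ⟨100, fun n hn => ?_⟩
  have hn2 : (10000 : ℝ) ≤ (n : ℝ)^2 := by
    have : (100 : ℝ) ≤ (n : ℝ) := by exact_mod_cast hn
    nlinarith
  have hpi : (0:ℝ) < π := Real.pi_pos
  set ε : ℝ := π / (2 * (n:ℝ)^2) with hε_def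
  have hε_pos : 0 < ε := by positivity
  have hε_small : ε ≤ π / 8 := by
    rw [hε_def, div_le_div_iff₀ (by positivity) (by norm_num)]
    nlinarith
  have hab : π / 2 ≤ π - ε := by nlinarith [Real.pi_gt_three]
  -- sin is positive on the interval
  have hsin_pos : ∀ y ∈ Icc (π/2) (π - ε), 0 < Real.sin y := by
    intro y hy
    exact Real.sin_pos_of_pos_of_lt_pi (by nlinarith [hy.1]) (by nlinarith [hy.2])
  have hcont : ContinuousOn gfun (Icc (π/2) (π - ε)) := by
    have hne : ∀ y ∈ Icc (π/2) (π - ε), Real.sin y ≠ 0 :=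
      fun y hy => ne_of_gt (hsin_pos y hy)
    apply ContinuousOn.mul
    · exact Real.continuous_exp.comp_continuousOn
        (ContinuousOn.div (by fun_prop) Real.continuous_sin.continuousOn hne)
    · exact ContinuousOn.div continuousOn_id Real.continuous_sin.continuousOn hne
  -- value at right endpoint is large
  have hgb : (n:ℝ)^2 ≤ gfun (π - ε) := by
    have hsinb : Real.sin (π - ε) = Real.sin ε := Real.sin_pi_sub ε
    have hcosb : Real.cos (π - ε) = -Real.cos ε := Real.cos_pi_sub ε
    have hsε_pos : 0 < Real.sin ε := Real.sin_pos_of_pos_of_lt_pi hε_pos (by nlinarith)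
    have hsε_le : Real.sin ε ≤ ε := Real.sin_le hε_pos.le
    have hcosε : 0 ≤ Real.cos ε :=
      Real.cos_nonneg_of_mem_Icc ⟨by nlinarith, by nlinarith⟩
    have hexp : (1:ℝ) ≤ Real.exp (-(π - ε) * Real.cos (π - ε) / Real.sin (π - ε)) := by
      rw [Real.one_le_exp_iff]
      rw [hsinb, hcosb]
      have h0 : -(π - ε) * -Real.cos ε = (π - ε) * Real.cos ε := by ring
      rw [h0]
      exact div_nonneg (by nlinarith) hsε_pos.le
    have hfrac : (n:ℝ)^2 ≤ (π - ε) / Real.sin (π - ε) := by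
      rw [hsinb]
      rw [le_div_iff₀ hsε_pos]
      have h1 : (n:ℝ)^2 * Real.sin ε ≤ (n:ℝ)^2 * ε := by
        apply mul_le_mul_of_nonneg_left hsε_le (by positivity)
      have h2 : (n:ℝ)^2 * ε = π / 2 := by
        rw [hε_def]; field_simp
      nlinarith
    calc (n:ℝ)^2 ≤ (π - ε) / Real.sin (π - ε) := hfrac
      _ ≤ gfun (π - ε) := by
          unfold gfun
          nlinarith [div_nonneg (by nlinarith : (0:ℝ) ≤ π - ε) (hsin_pos (π - ε) ⟨hab, le_refl _⟩).le]
  -- IVT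
  have hmem : (n:ℝ)^2 ∈ Icc (gfun (π/2)) (gfun (π - ε)) := by
    rw [gfun_pi_div_two]
    exact ⟨by nlinarith [Real.pi_lt_d2], hgb⟩
  obtain ⟨y, hy, hgy⟩ := intermediate_value_Icc hab hcont hmem
  -- set up notation
  set s : ℝ := Real.sin y with hs_def
  have hs_pos : 0 < s := hsin_pos y hy
  have hs_le : s ≤ 1 := Real.sin_le_one y
  have hy_lt_pi : y < π := by nlinarith [hy.2]
  have hy_ge : π/2 ≤ y := hy.1
  -- y > π/2 strictly
  have hy_gt : π/2 < y := by
    rcases lt_or_eq_of_le hy_ge with h | h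
    · exact h
    · exfalso
      rw [← h, gfun_pi_div_two] at hgy
      nlinarith [Real.pi_lt_d2]
  have hc_neg : Real.cos y < 0 :=
    Real.cos_neg_of_pi_div_two_lt_of_lt hy_gt (by nlinarith)
  set x : ℝ := -y * Real.cos y / s with hx_def
  have hx_pos : 0 < x := by
    apply div_pos _ hs_pos
    nlinarith
  have hgy' : Real.exp x * (y / s) = (n:ℝ)^2 := by
    rw [← hgy]; unfold gfun; rw [← hs_def, ← hx_def]
  have hxs : x * s = -(y * Real.cos y) := by
    rw [hx_def]; field_simp
  -- the complex root
  refine ⟨(x:ℂ) + y * Complex.I, ?_, ?_⟩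
  · have hexp : Complex.exp (-((x:ℂ) + y * Complex.I))
        = Complex.exp (-(x:ℂ)) * ((Real.cos y : ℂ) - (Real.sin y : ℂ) * Complex.I) := by
      rw [neg_add, Complex.exp_add]
      congr 1
      rw [← neg_mul, Complex.exp_mul_I]
      push_cast [Complex.cos_neg, Complex.sin_neg, Complex.ofReal_cos, Complex.ofReal_sin]
      ring
    have hn2c : ((n:ℂ))^2 = Complex.exp (x:ℂ) * ((y/s : ℝ) : ℂ) := by
      rw [← Complex.ofReal_exp, ← Complex.ofReal_mul, hgy']
      norm_cast
    rw [hexp, hn2c]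
    have hee : Complex.exp (x:ℂ) * Complex.exp (-(x:ℂ)) = 1 := by
      rw [← Complex.exp_add]; simp
    have key : ((x:ℂ) + y * Complex.I) + ((y/s : ℝ) : ℂ) * ((Real.cos y : ℂ) - (Real.sin y : ℂ) * Complex.I)
        = ((x + (y/s) * Real.cos y : ℝ) : ℂ) + ((y - (y/s) * Real.sin y : ℝ) : ℂ) * Complex.I := by
      push_cast; ring
    have hre : x + (y/s) * Real.cos y = 0 := by
      rw [hx_def]; field_simp; ring
    have him : y - (y/s) * Real.sin y = 0 := by
      rw [← hs_def]; field_simp; ring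
    calc (x:ℂ) + y * Complex.I + Complex.exp (x:ℂ) * ((y/s : ℝ) : ℂ) *
          (Complex.exp (-(x:ℂ)) * ((Real.cos y : ℂ) - (Real.sin y : ℂ) * Complex.I))
        = ((x:ℂ) + y * Complex.I) + ((y/s : ℝ) : ℂ) * ((Real.cos y : ℂ) - (Real.sin y : ℂ) * Complex.I) := by
          rw [show Complex.exp (x:ℂ) * ((y/s : ℝ) : ℂ) *
            (Complex.exp (-(x:ℂ)) * ((Real.cos y : ℂ) - (Real.sin y : ℂ) * Complex.I))
            = (Complex.exp (x:ℂ) * Complex.exp (-(x:ℂ))) * (((y/s : ℝ) : ℂ) * ((Real.cos y : ℂ) - (Real.sin y : ℂ) * Complex.I)) from by ring, hee]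
          ring
      _ = ((x + (y/s) * Real.cos y : ℝ) : ℂ) + ((y - (y/s) * Real.sin y : ℝ) : ℂ) * Complex.I := key
      _ = 0 := by rw [hre, him]; simp
  · -- the real part bound
    have hlre : ((x:ℂ) + y * Complex.I).re = x := by simp
    rw [hlre]
    set L : ℝ := Real.log ((n:ℝ)^2) with hL_def
    clear_value L
    clear_value s x
    have hys_pos : 0 < y / s := div_pos (by linarith) hs_pos
    have hys_sq : (y/s)^2 = x^2 + y^2 := by
      have hsc := Real.sin_sq_add_cos_sq y
      rw [← hs_def] at hsc
      have h1 : x^2 * s^2 = y^2 * (Real.cos y)^2 := by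
        rw [← mul_pow, hxs]; ring
      rw [div_pow, div_eq_iff (pow_ne_zero 2 (ne_of_gt hs_pos))]
      linear_combination -h1 - y^2 * hsc
    have hL_eq : L = x + Real.log (y/s) := by
      rw [hL_def, ← hgy', Real.log_mul (Real.exp_ne_zero x) (ne_of_gt hys_pos), Real.log_exp]
    have hys_ge1 : 1 ≤ y/s := by
      rw [le_div_iff₀ hs_pos]
      nlinarith [Real.pi_gt_three]
    have hlog_ys_nonneg : 0 ≤ Real.log (y/s) := Real.log_nonneg hys_ge1
    have hxL : x ≤ L := by linarith [hL_eq.ge]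
    have hL6 : 6 ≤ L := by
      rw [hL_def, Real.le_log_iff_exp_le (by positivity)]
      have he1 : Real.exp 1 < 2.7182818286 := Real.exp_one_lt_d9
      have h6 : Real.exp 6 = (Real.exp 1)^6 := by
        rw [← Real.exp_nat_mul]; norm_num
      have hep : (0:ℝ) < Real.exp 1 := Real.exp_pos 1
      have hp6 : Real.exp 1 ^ 6 ≤ (2.7182818286:ℝ) ^ 6 := by
        gcongr
      have hnum : (2.7182818286:ℝ) ^ 6 ≤ 10000 := by norm_num
      linarith
    have hpi315 : π < 3.15 := Real.pi_lt_d2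
    have hxpi : π ≤ x := by
      by_contra hcon
      push_neg at hcon
      have hys5 : y/s < 5 := by nlinarith [hys_sq]
      have hlog5 : Real.log (y/s) < 2 := by
        have h1 : Real.log (y/s) < Real.log 5 := Real.log_lt_log hys_pos hys5
        have h2 : Real.log 5 < 2 := by
          rw [Real.log_lt_iff_lt_exp (by norm_num)]
          have he1 : (2.7182818283:ℝ) < Real.exp 1 := Real.exp_one_gt_d9
          have h22 : Real.exp 2 = (Real.exp 1)^2 := by
            rw [← Real.exp_nat_mul]; norm_num
          nlinarith [he1, h22]
        linarith
      linarith [hL_eq.le]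
    have h2x : y/s ≤ 2*x := by nlinarith [hys_sq, hy_lt_pi, hy_gt]
    have hlogchain : Real.log (y/s) ≤ 1 + Real.log L := by
      have h1 : Real.log (y/s) ≤ Real.log (2*x) := by
        apply Real.log_le_log hys_pos h2x
      have h2 : Real.log (2*x) = Real.log 2 + Real.log x :=
        Real.log_mul two_ne_zero (ne_of_gt hx_pos)
      have h3 : Real.log x ≤ Real.log L := Real.log_le_log hx_pos hxL
      have h4 : Real.log 2 < 1 := by linarith [Real.log_two_lt_d9]
      linarith
    linarith [hL_eq.le]
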